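/- Let ω : [0, δ] → [0,∞) be a modulus of continuity satisfying the Q-decreasing quotient property. Then for every Θ ≥ 1 and every t ∈ (0, δ/Θ], one has ∫₀^{Θt} (ω(s)/s) ds ≤ 2Q²·Θ·∫₀ᵗ (ω(s)/s) ds. -/

import Mathlib

open MeasureTheory

theorem stmt1 (δ Q : ℝ) (hδ0 : 0 < δ) (hδ1 : δ ≤ 1) (hQ : 1 ≤ Q)
    (ω : ℝ → ℝ)
    (hmono : MonotoneOn ω (Set.Icc 0 δ))
    (hcont : ContinuousOn ω (Set.Icc 0 δ))
    (hω0 : ω 0 = 0)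
    (hωpos : ∀ t : ℝ, 0 < t → t ≤ δ → 0 < ω t)
    (hquot : ∀ h r : ℝ, 0 < h → h ≤ r → r ≤ δ → ω r / r ≤ Q * (ω h / h)) :
    ∀ Θ : ℝ, 1 ≤ Θ → ∀ t : ℝ, 0 < t → t ≤ δ / Θ →
      (∫ s in (0:ℝ)..(Θ * t), ω s / s) ≤ 2 * Q ^ 2 * Θ * ∫ s in (0:ℝ)..t, ω s / s := by
  intro Θ hΘ t ht htδ
  have hQ0 : (0 : ℝ) < Q := by linarith
  have hΘ0 : (0 : ℝ) < Θ := by linarith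
  set f : ℝ → ℝ := fun s => ω s / s with hfdef
  have hΘt : t ≤ Θ * t := le_mul_of_one_le_left ht.le hΘ
  have hΘtδ : Θ * t ≤ δ := by
    rw [mul_comm]
    exact (le_div_iff₀ hΘ0).1 htδ
  have htδ' : t ≤ δ := hΘt.trans hΘtδ
  have hfnn : ∀ u ∈ Set.Icc (0:ℝ) δ, 0 ≤ f u := by
    intro u hu
    rcases eq_or_lt_of_le hu.1 with h0 | h0
    · simp [f, ← h0, hω0]
    · exact div_nonneg (hωpos u h0 hu.2).le h0.le
  have hInn : 0 ≤ ∫ s in (0:ℝ)..t, f s :=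
    intervalIntegral.integral_nonneg ht.le (fun u hu => hfnn u ⟨hu.1, hu.2.trans htδ'⟩)
  by_cases hint : IntervalIntegrable f volume 0 (Θ * t)
  · have h1 : IntervalIntegrable f volume 0 t := by
      apply hint.mono_set
      rw [Set.uIcc_of_le ht.le, Set.uIcc_of_le (ht.le.trans hΘt)]
      exact Set.Icc_subset_Icc le_rfl hΘt
    have h2 : IntervalIntegrable f volume t (Θ * t) := by
      apply hint.mono_set
      rw [Set.uIcc_of_le hΘt, Set.uIcc_of_le (ht.le.trans hΘt)]
      exact Set.Icc_subset_Icc ht.le le_rfl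
    -- Lower bound: ω t / Q ≤ ∫₀ᵗ f
    have hA : ω t / Q ≤ ∫ s in (0:ℝ)..t, f s := by
      rw [intervalIntegral.integral_of_le ht.le]
      have hconst : ∫ _ in Set.Ioc (0:ℝ) t, (ω t / (Q * t)) = t * (ω t / (Q * t)) := by
        rw [setIntegral_const, measureReal_def, Real.volume_Ioc, smul_eq_mul]
        rw [ENNReal.toReal_ofReal (by linarith)]
        ring_nf
      calc ω t / Q = t * (ω t / (Q * t)) := by field_simp
        _ = ∫ _ in Set.Ioc (0:ℝ) t, (ω t / (Q * t)) := hconst.symm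
        _ ≤ ∫ s in Set.Ioc (0:ℝ) t, f s := by
            apply setIntegral_mono_on (integrableOn_const (by simp))
              h1.1 measurableSet_Ioc
            intro s hs
            have hq := hquot s t hs.1 hs.2 htδ'
            calc ω t / (Q * t) = (ω t / t) / Q := by rw [div_div, mul_comm]
              _ ≤ (Q * (ω s / s)) / Q := by
                  exact (div_le_div_iff_of_pos_right hQ0).2 hq
              _ = ω s / s := mul_div_cancel_left₀ _ hQ0.ne'
    -- Upper bound on the tail
    have hB : (∫ s in t..(Θ * t), f s) ≤ Q * (Θ - 1) * ω t := by
      rw [intervalIntegral.integral_of_le hΘt]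
      calc ∫ s in Set.Ioc t (Θ * t), f s
          ≤ ∫ _ in Set.Ioc t (Θ * t), (Q * (ω t / t)) := by
            apply setIntegral_mono_on h2.1 (integrableOn_const (by simp))
              measurableSet_Ioc
            intro s hs
            exact hquot t s ht hs.1.le (hs.2.trans hΘtδ)
        _ = (Θ * t - t) * (Q * (ω t / t)) := by
            rw [setIntegral_const, measureReal_def, Real.volume_Ioc, smul_eq_mul]
            rw [ENNReal.toReal_ofReal (by linarith)]
        _ = Q * (Θ - 1) * ω t := by field_simp
    have hsplit : (∫ s in (0:ℝ)..(Θ * t), f s)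
        = (∫ s in (0:ℝ)..t, f s) + ∫ s in t..(Θ * t), f s :=
      (intervalIntegral.integral_add_adjacent_intervals h1 h2).symm
    have hωQI : ω t ≤ Q * ∫ s in (0:ℝ)..t, f s := by
      have := (div_le_iff₀ hQ0).1 hA
      linarith [this]
    rw [hsplit]
    set I := ∫ s in (0:ℝ)..t, f s
    have hQΘ : (0:ℝ) ≤ Q * (Θ - 1) := by nlinarith
    nlinarith [mul_le_mul_of_nonneg_left hωQI hQΘ,
      mul_nonneg (by nlinarith : (0:ℝ) ≤ Q ^ 2 - 1) hInn,
      mul_nonneg (mul_nonneg (mul_nonneg hQ0.le hQ0.le) (by linarith : (0:ℝ) ≤ Θ - 1)) hInn,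
      mul_nonneg (mul_nonneg hQ0.le hQ0.le) hInn]
  · rw [intervalIntegral.integral_undef hint]
    exact mul_nonneg (by nlinarith) hInn
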